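/- Let K₀ be a bounded linear operator on a Hilbert space with ‖K₀‖ ≤ 1 such that I − K₀ is boundedly invertible, and let p_m(z) = 2·∑_{k=1}^{m-1}(1 − k/m)·z^{k−1}. Then ‖p_m(K₀)‖ ≤ 4·‖(I − K₀)^{-1}‖. -/
import Mathlib


open Finset

/-- If `K₀` is a bounded operator on a complex Hilbert space with `‖K₀‖ ≤ 1`
such that `I − K₀` is boundedly invertible with inverse `J`, then
`‖p_m(K₀)‖ ≤ 4·‖(I − K₀)⁻¹‖` where `p_m(z) = 2·∑_{k=1}^{m-1}(1 − k/m)·z^{k−1}`. -/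
theorem stmt1 {H : Type*} [NormedAddCommGroup H] [InnerProductSpace ℂ H] [CompleteSpace H]
    (K₀ : H →L[ℂ] H) (hK : ‖K₀‖ ≤ 1) (J : H →L[ℂ] H)
    (hJ₁ : (1 - K₀) * J = 1) (hJ₂ : J * (1 - K₀) = 1) (m : ℕ) (hm : 1 ≤ m) :
    ‖∑ k ∈ Finset.Ico 1 m, ((2 : ℂ) * (1 - (k : ℂ) / m)) • K₀ ^ (k - 1)‖ ≤ 4 * ‖J‖ := by
  have hm0 : (m : ℂ) ≠ 0 := Nat.cast_ne_zero.mpr (by omega)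
  have hmr : (0:ℝ) < (m : ℝ) := by exact_mod_cast Nat.pos_of_ne_zero (by omega)
  -- powers have norm ≤ 1
  have hpow : ∀ k : ℕ, ‖K₀ ^ k‖ ≤ 1 := by
    intro k
    induction k with
    | zero => simpa [ContinuousLinearMap.one_def] using ContinuousLinearMap.norm_id_le
    | succ n ih =>
      calc ‖K₀ ^ (n+1)‖ = ‖K₀ ^ n * K₀‖ := by rw [pow_succ]
        _ ≤ ‖K₀ ^ n‖ * ‖K₀‖ := norm_mul_le _ _
        _ ≤ 1 * 1 := mul_le_mul ih hK (norm_nonneg _) zero_le_one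
        _ = 1 := one_mul 1
  -- key telescoping identity
  have key : ∀ n : ℕ, (1 - K₀) * (∑ k ∈ Finset.Ico 1 n, ((n : ℂ) - k) • K₀ ^ (k - 1))
      = (n : ℂ) • 1 - ∑ k ∈ Finset.range n, K₀ ^ k := by
    intro n
    induction n with
    | zero => simp
    | succ n ih =>
      have hA : (∑ k ∈ Finset.Ico 1 (n+1), (((n:ℂ)+1) - k) • K₀ ^ (k - 1))
          = (∑ k ∈ Finset.Ico 1 n, ((n : ℂ) - k) • K₀ ^ (k - 1))
            + ∑ j ∈ Finset.range n, K₀ ^ j := by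
        have h1 : (∑ k ∈ Finset.Ico 1 (n+1), (((n:ℂ)+1) - k) • K₀ ^ (k - 1))
            = (∑ k ∈ Finset.Ico 1 (n+1), ((n:ℂ) - k) • K₀ ^ (k - 1))
              + ∑ k ∈ Finset.Ico 1 (n+1), K₀ ^ (k - 1) := by
          rw [← Finset.sum_add_distrib]
          refine Finset.sum_congr rfl fun k _ => ?_
          have hco : ((n:ℂ)+1) - k = ((n:ℂ) - k) + 1 := by ring
          rw [hco, add_smul, one_smul]
        have h2 : (∑ k ∈ Finset.Ico 1 (n+1), ((n:ℂ) - k) • K₀ ^ (k - 1))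
            = ∑ k ∈ Finset.Ico 1 n, ((n : ℂ) - k) • K₀ ^ (k - 1) := by
          rcases Nat.eq_zero_or_pos n with h | h
          · subst h; simp
          · rw [Finset.sum_Ico_succ_top (by omega)]
            simp
        have h3 : (∑ k ∈ Finset.Ico 1 (n+1), K₀ ^ (k - 1)) = ∑ j ∈ Finset.range n, K₀ ^ j := by
          rw [Finset.sum_Ico_eq_sum_range]
          simp
        rw [h1, h2, h3]
      have geo : (1 - K₀) * (∑ j ∈ Finset.range n, K₀ ^ j) = 1 - K₀ ^ n := by
        have h := geom_sum_mul K₀ n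
        have h' : (1 - K₀) = -(K₀ - 1) := (neg_sub K₀ 1).symm
        have hc : ∀ j : ℕ, K₀ * K₀ ^ j = K₀ ^ j * K₀ := fun j => ((Commute.refl K₀).pow_right j).eq
        have hmul : (K₀ - 1) * (∑ j ∈ Finset.range n, K₀ ^ j)
            = (∑ j ∈ Finset.range n, K₀ ^ j) * (K₀ - 1) := by
          rw [Finset.mul_sum, Finset.sum_mul]
          exact Finset.sum_congr rfl fun j _ => by
            rw [sub_mul, mul_sub, hc j, mul_one, one_mul]
        rw [h', neg_mul, hmul, h, neg_sub]
      push_cast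
      rw [hA, mul_add, ih, geo, Finset.sum_range_succ, add_smul, one_smul]
      abel
  -- rewrite the sum
  set T : H →L[ℂ] H := ∑ k ∈ Finset.range m, K₀ ^ k with hT
  set A : H →L[ℂ] H := ∑ k ∈ Finset.Ico 1 m, ((m : ℂ) - k) • K₀ ^ (k - 1) with hAdef
  have hS : (∑ k ∈ Finset.Ico 1 m, ((2 : ℂ) * (1 - (k : ℂ) / m)) • K₀ ^ (k - 1))
      = ((2 : ℂ)/m) • A := by
    rw [hAdef, Finset.smul_sum]
    refine Finset.sum_congr rfl fun k _ => ?_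
    rw [smul_smul]
    congr 1
    field_simp
  have h2 : (1 - K₀) * (((2:ℂ)/m) • A) = (2:ℂ) • 1 - ((2:ℂ)/m) • T := by
    rw [mul_smul_comm, key m, smul_sub, smul_smul, div_mul_cancel₀ _ hm0]
  have hfac : ((2 : ℂ)/m) • A = J * ((2:ℂ) • 1 - ((2:ℂ)/m) • T) := by
    rw [← h2, ← mul_assoc, hJ₂, one_mul]
  have hTnorm : ‖T‖ ≤ (m : ℝ) := by
    calc ‖T‖ ≤ ∑ k ∈ Finset.range m, ‖K₀ ^ k‖ := norm_sum_le _ _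
      _ ≤ ∑ _k ∈ Finset.range m, (1:ℝ) := Finset.sum_le_sum fun k _ => hpow k
      _ = m := by simp
  have hX : ‖(2:ℂ) • (1 : H →L[ℂ] H) - ((2:ℂ)/m) • T‖ ≤ 4 := by
    calc ‖(2:ℂ) • (1 : H →L[ℂ] H) - ((2:ℂ)/m) • T‖
        ≤ ‖(2:ℂ) • (1 : H →L[ℂ] H)‖ + ‖((2:ℂ)/m) • T‖ := norm_sub_le _ _
      _ = 2 * ‖(1 : H →L[ℂ] H)‖ + (2 / m) * ‖T‖ := by
          rw [norm_smul, norm_smul, norm_div]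
          norm_num
      _ ≤ 2 * 1 + (2 / m) * (m : ℝ) := by
          gcongr
          simpa [ContinuousLinearMap.one_def] using ContinuousLinearMap.norm_id_le
      _ = 4 := by field_simp; norm_num
  calc ‖∑ k ∈ Finset.Ico 1 m, ((2 : ℂ) * (1 - (k : ℂ) / m)) • K₀ ^ (k - 1)‖
      = ‖J * ((2:ℂ) • 1 - ((2:ℂ)/m) • T)‖ := by rw [hS, hfac]
    _ ≤ ‖J‖ * ‖(2:ℂ) • (1 : H →L[ℂ] H) - ((2:ℂ)/m) • T‖ := norm_mul_le _ _
    _ ≤ ‖J‖ * 4 := by gcongr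
    _ = 4 * ‖J‖ := mul_comm _ _
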